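/- Let PP₁₁(t) = (t+1)²(t+1/2)²(t+1/3)(t+1/6)·t²·(t−1/6)(t−1/3)(t−1/2). For every finite set C on the unit sphere of EuclideanSpace ℝ (Fin 48) satisfying ∑_{x,y∈C} (50·⟨x,y⟩³ − 3·⟨x,y⟩)/47 = 0 (i.e., the third moment M₃(C) of C vanishes, as holds for every antipodal code and every spherical 3-design), one has ∑_{x,y∈C} PP₁₁(⟨x,y⟩) ≥ |C|²/13478400. -/

import Mathlib

/-- The eleventh partial product of the Newton form at the `T₁` node multiset. -/
noncomputable def PP11 (t : ℝ) : ℝ :=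
  (t + 1) ^ 2 * (t + 1/2) ^ 2 * (t + 1/3) * (t + 1/6) * t ^ 2 *
    (t - 1/6) * (t - 1/3) * (t - 1/2)

noncomputable section PP11Aux
open MvPolynomial Finset

abbrev PPoly := MvPolynomial (Fin 48) ℝ

/-- weight for the Bombieri/apolar inner product -/
def ppwt (α : Fin 48 →₀ ℕ) : ℝ := ∏ j : Fin 48, (Nat.factorial (α j) : ℝ)

lemma ppwt_nonneg (α) : 0 ≤ ppwt α := by
  apply Finset.prod_nonneg; intro j _; positivity

lemma ppwt_sub_single {α : Fin 48 →₀ ℕ} {i : Fin 48} (h : α i ≠ 0) :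
    ppwt α = ppwt (α - Finsupp.single i 1) * (α i) := by
  have h2 : ∀ j ∈ Finset.univ.erase i,
      (Nat.factorial ((α - Finsupp.single i 1 : Fin 48 →₀ ℕ) j) : ℝ) = (Nat.factorial (α j) : ℝ) := by
    intro j hj
    have : j ≠ i := (Finset.mem_erase.mp hj).1
    simp [Finsupp.sub_apply, Finsupp.single_apply, Ne.symm this]
  have e1 : ppwt α
      = (Nat.factorial (α i) : ℝ) * ∏ j ∈ Finset.univ.erase i, (Nat.factorial (α j) : ℝ) :=
    (Finset.mul_prod_erase _ _ (Finset.mem_univ i)).symm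
  have e2 : ppwt (α - Finsupp.single i 1)
      = (Nat.factorial (α i - 1) : ℝ) * ∏ j ∈ Finset.univ.erase i, (Nat.factorial (α j) : ℝ) := by
    rw [ppwt, ← Finset.mul_prod_erase Finset.univ _ (Finset.mem_univ i)]
    congr 1
    · congr 2
      simp [Finsupp.sub_apply]
    · exact Finset.prod_congr rfl h2
  rw [e1, e2]
  have h3 : (α i) * Nat.factorial (α i - 1) = Nat.factorial (α i) :=
    Nat.mul_factorial_pred h
  push_cast [← h3]
  ring

/-- The apolar pairing -/
def apolar (p q : PPoly) : ℝ := ∑ α ∈ p.support ∪ q.support, p.coeff α * q.coeff α * ppwt α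

lemma apolar_eq_sum {p q : PPoly} {s : Finset (Fin 48 →₀ ℕ)} (h : p.support ⊆ s) :
    apolar p q = ∑ α ∈ s, p.coeff α * q.coeff α * ppwt α := by
  unfold apolar
  have e1 : ∑ α ∈ p.support ∪ q.support, p.coeff α * q.coeff α * ppwt α
      = ∑ α ∈ s ∪ q.support, p.coeff α * q.coeff α * ppwt α := by
    apply Finset.sum_subset (Finset.union_subset_union h subset_rfl)
    intro α _ hα
    have : α ∉ p.support := fun hc => hα (Finset.mem_union_left _ hc)
    rw [MvPolynomial.notMem_support_iff.mp this]; ring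
  rw [e1]
  symm
  apply Finset.sum_subset Finset.subset_union_left
  intro α _ hα
  have : α ∉ p.support := fun hc => hα (h hc)
  rw [MvPolynomial.notMem_support_iff.mp this]; ring

lemma apolar_comm (p q : PPoly) : apolar p q = apolar q p := by
  rw [apolar, apolar_eq_sum (q := p) (s := p.support ∪ q.support) Finset.subset_union_right]
  exact Finset.sum_congr rfl fun α _ => by ring

lemma apolar_add_left (p₁ p₂ q : PPoly) :
    apolar (p₁ + p₂) q = apolar p₁ q + apolar p₂ q := by
  classical
  rw [apolar_eq_sum (s := p₁.support ∪ p₂.support)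
        MvPolynomial.support_add,
      apolar_eq_sum (s := p₁.support ∪ p₂.support) Finset.subset_union_left,
      apolar_eq_sum (s := p₁.support ∪ p₂.support) Finset.subset_union_right,
      ← Finset.sum_add_distrib]
  exact Finset.sum_congr rfl fun α _ => by rw [MvPolynomial.coeff_add]; ring

lemma apolar_smul_left (c : ℝ) (p q : PPoly) : apolar (c • p) q = c * apolar p q := by
  rw [apolar_eq_sum (p := c • p) (s := p.support) MvPolynomial.support_smul,
      apolar_eq_sum (p := p) (q := q) (s := p.support) subset_rfl, Finset.mul_sum]
  exact Finset.sum_congr rfl fun α _ => by rw [MvPolynomial.coeff_smul, smul_eq_mul]; ring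

lemma apolar_zero_left (q : PPoly) : apolar 0 q = 0 := by
  rw [apolar_eq_sum (s := ∅) (by simp)]; simp

lemma apolar_add_right (p q₁ q₂ : PPoly) :
    apolar p (q₁ + q₂) = apolar p q₁ + apolar p q₂ := by
  rw [apolar_comm, apolar_add_left, apolar_comm q₁ p, apolar_comm q₂ p]

lemma apolar_smul_right (c : ℝ) (p q : PPoly) : apolar p (c • q) = c * apolar p q := by
  rw [apolar_comm, apolar_smul_left, apolar_comm]

lemma apolar_zero_right (p : PPoly) : apolar p 0 = 0 := by
  rw [apolar_comm, apolar_zero_left]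

lemma apolar_sum_left {ι : Type*} (s : Finset ι) (f : ι → PPoly) (q : PPoly) :
    apolar (∑ i ∈ s, f i) q = ∑ i ∈ s, apolar (f i) q := by
  induction s using Finset.cons_induction with
  | empty => simp [apolar_zero_left]
  | cons i s hi ih => rw [Finset.sum_cons, apolar_add_left, ih, Finset.sum_cons]

lemma apolar_sum_right {ι : Type*} (s : Finset ι) (p : PPoly) (f : ι → PPoly) :
    apolar p (∑ i ∈ s, f i) = ∑ i ∈ s, apolar p (f i) := by
  rw [apolar_comm, apolar_sum_left]
  exact Finset.sum_congr rfl fun i _ => apolar_comm _ _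

lemma apolar_self_nonneg (p : PPoly) : 0 ≤ apolar p p := by
  unfold apolar
  apply Finset.sum_nonneg
  intro α _
  have := ppwt_nonneg α
  nlinarith [sq_nonneg (p.coeff α)]

lemma apolar_monomial_left (α : Fin 48 →₀ ℕ) (c : ℝ) (q : PPoly) :
    apolar (MvPolynomial.monomial α c) q = c * q.coeff α * ppwt α := by
  rw [apolar_eq_sum (s := {α}) (MvPolynomial.support_monomial_subset)]
  simp [MvPolynomial.coeff_monomial]

lemma apolar_one_one : apolar (1 : PPoly) 1 = 1 := by
  have h : (1 : PPoly) = MvPolynomial.monomial 0 1 := by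
    rw [MvPolynomial.monomial_zero', map_one]
  rw [h, apolar_monomial_left]
  simp [ppwt, MvPolynomial.coeff_monomial]

/-- key adjointness: multiplication by `X i` is adjoint to `∂ i` -/
lemma apolar_X_mul (i : Fin 48) (p q : PPoly) :
    apolar (X i * p) q = apolar p (MvPolynomial.pderiv i q) := by
  classical
  induction q using MvPolynomial.induction_on' with
  | add q₁ q₂ h₁ h₂ => rw [apolar_add_right, map_add, apolar_add_right, h₁, h₂]
  | monomial α c =>
    rw [apolar_comm, apolar_monomial_left, MvPolynomial.pderiv_monomial, apolar_comm,
        apolar_monomial_left, MvPolynomial.coeff_X_mul']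
    by_cases h : i ∈ α.support
    · have hne : α i ≠ 0 := Finsupp.mem_support_iff.mp h
      rw [if_pos h, ppwt_sub_single hne]
      push_cast
      ring
    · rw [if_neg h]
      have : α i = 0 := by simpa using h
      rw [this]
      push_cast
      ring



/-- the Laplace operator -/
def lapP (p : PPoly) : PPoly := ∑ i : Fin 48, pderiv i (pderiv i p)

def RP : PPoly := ∑ i : Fin 48, X i ^ 2

def LX (x : Fin 48 → ℝ) : PPoly := ∑ i : Fin 48, C (x i) * X i

lemma pderiv_RP (j : Fin 48) : pderiv j RP = 2 * X j := by
  rw [RP, map_sum]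
  rw [Finset.sum_eq_single j]
  · rw [pderiv_pow, pderiv_X_self]; norm_num
  · intro i _ hij
    rw [pderiv_pow, pderiv_X_of_ne hij]; ring
  · simp

lemma pderiv_LX (j : Fin 48) (x : Fin 48 → ℝ) : pderiv j (LX x) = C (x j) := by
  rw [LX, map_sum]
  rw [Finset.sum_eq_single j]
  · rw [pderiv_C_mul, pderiv_X_self]; ring
  · intro i _ hij
    rw [pderiv_C_mul, pderiv_X_of_ne hij]; ring
  · simp

lemma pderiv_nat (j : Fin 48) (n : ℕ) : pderiv j ((n : ℕ) : PPoly) = 0 := by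
  rw [← map_natCast (C : ℝ →+* PPoly), pderiv_C]

lemma pderiv_two (j : Fin 48) : pderiv j (2 : PPoly) = 0 := by
  rw [← map_ofNat (C : ℝ →+* PPoly) 2, pderiv_C]

lemma nmul_pow_sub_one (n : ℕ) (f : PPoly) : (n : PPoly) * f ^ (n-1) * f = (n : PPoly) * f ^ n := by
  cases n with
  | zero => simp
  | succ k => rw [Nat.add_sub_cancel, pow_succ]; ring

lemma cast_mul_sub_one (n : ℕ) :
    (n : PPoly) * ((n-1 : ℕ) : PPoly) = (n : PPoly) * ((n : PPoly) - 1) := by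
  cases n with
  | zero => simp
  | succ k => rw [Nat.add_sub_cancel]; push_cast; ring

lemma pd1 (j : Fin 48) (a m : ℕ) (x : Fin 48 → ℝ) :
    pderiv j (RP ^ a * LX x ^ m)
      = (a : PPoly) * RP ^ (a-1) * (2 * X j) * LX x ^ m
        + (m : PPoly) * LX x ^ (m-1) * C (x j) * RP ^ a := by
  rw [pderiv_mul, pderiv_pow, pderiv_pow, pderiv_RP, pderiv_LX]
  ring

lemma sum_quad (A B D E : PPoly) (x : Fin 48 → ℝ) :
    ∑ j : Fin 48, (A * (X j * X j) + B * (C (x j) * X j) + D * (C (x j) * C (x j)) + E)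
      = A * RP + B * LX x + D * C (∑ i : Fin 48, x i ^ 2) + 48 * E := by
  have hA : ∑ j : Fin 48, (A * (X j * X j)) = A * RP := by
    rw [← Finset.mul_sum, RP]
    refine congrArg (A * ·) ?_
    exact Finset.sum_congr rfl fun j _ => (sq (X j)).symm
  have hB : ∑ j : Fin 48, (B * (C (x j) * X j)) = B * LX x := by
    rw [← Finset.mul_sum, LX]
  have hD : ∑ j : Fin 48, (D * (C (x j) * C (x j))) = D * C (∑ i : Fin 48, x i ^ 2) := by
    rw [← Finset.mul_sum, map_sum]
    refine congrArg (D * ·) ?_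
    exact Finset.sum_congr rfl fun j _ => by rw [← C_mul, ← sq]
  have hE : ∑ _j : Fin 48, E = 48 * E := by
    rw [Finset.sum_const, Finset.card_univ, Fintype.card_fin, nsmul_eq_mul]
    norm_num
  rw [Finset.sum_add_distrib, Finset.sum_add_distrib, Finset.sum_add_distrib, hA, hB, hD, hE]

lemma lap_RL (a m : ℕ) (x : Fin 48 → ℝ) (hx : ∑ i : Fin 48, x i ^ 2 = 1) :
    lapP (RP ^ a * LX x ^ m)
      = ((a : PPoly) * (4*((a : PPoly)-1) + 96 + 4*(m : PPoly))) * (RP ^ (a-1) * LX x ^ m)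
        + ((m : PPoly) * ((m : PPoly) - 1)) * (RP ^ a * LX x ^ (m-2)) := by
  have step : ∀ j : Fin 48, pderiv j (pderiv j (RP ^ a * LX x ^ m)) =
      (4 * (a : PPoly) * ((a-1 : ℕ) : PPoly) * RP ^ (a-1-1) * LX x ^ m) * (X j * X j)
      + (4 * (a : PPoly) * (m : PPoly) * RP ^ (a-1) * LX x ^ (m-1)) * (C (x j) * X j)
      + ((m : PPoly) * ((m-1 : ℕ) : PPoly) * RP ^ a * LX x ^ (m-1-1)) * (C (x j) * C (x j))
      + (2 * (a : PPoly) * RP ^ (a-1) * LX x ^ m) := by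
    intro j
    rw [pd1, map_add]
    simp only [pderiv_mul, pderiv_pow, pderiv_RP, pderiv_LX, pderiv_X_self, pderiv_C,
        pderiv_nat, pderiv_two]
    ring
  rw [lapP, Finset.sum_congr rfl (fun j _ => step j), sum_quad, hx, map_one]
  have h1 := nmul_pow_sub_one (a-1) RP
  have h2 := nmul_pow_sub_one m (LX x)
  have h3 : LX x ^ (m-1-1) = LX x ^ (m-2) := by rw [Nat.sub_sub]
  have h4 := cast_mul_sub_one m
  have h5 := cast_mul_sub_one a
  rw [h3]
  linear_combination (4 * (a : PPoly) * LX x ^ m) * h1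
    + (4 * (a : PPoly) * RP ^ (a-1)) * h2
    + (4 * RP ^ (a-1) * LX x ^ m) * h5
    + (RP ^ a * LX x ^ (m-2)) * h4



lemma lapP_add (p q : PPoly) : lapP (p + q) = lapP p + lapP q := by
  unfold lapP
  rw [← Finset.sum_add_distrib]
  exact Finset.sum_congr rfl fun i _ => by rw [map_add, map_add]

lemma lapP_smul (c : ℝ) (p : PPoly) : lapP (c • p) = c • lapP p := by
  unfold lapP
  rw [Finset.smul_sum]
  exact Finset.sum_congr rfl fun i _ => by rw [Derivation.map_smul, Derivation.map_smul]

/-- instance lemma, `•`-form -/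
lemma lap_inst (a m : ℕ) (c₁ c₂ : ℝ) (x : Fin 48 → ℝ) (hx : ∑ i : Fin 48, x i ^ 2 = 1)
    (h₁ : (a * (4*((a:ℝ)-1) + 96 + 4*m)) = c₁) (h₂ : ((m:ℝ) * ((m:ℝ) - 1)) = c₂) :
    lapP (RP ^ a * LX x ^ m)
      = c₁ • (RP ^ (a-1) * LX x ^ m) + c₂ • (RP ^ a * LX x ^ (m-2)) := by
  rw [lap_RL a m x hx, ← h₁, ← h₂]
  rw [MvPolynomial.smul_eq_C_mul, MvPolynomial.smul_eq_C_mul]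
  simp only [map_mul, map_add, map_sub, map_natCast, map_ofNat, map_one]

def T8 (x : Fin 48 → ℝ) : PPoly :=
  RP ^ 0 * LX x ^ 8 + (-7/15 : ℝ) • (RP ^ 1 * LX x ^ 6) + (7/116 : ℝ) • (RP ^ 2 * LX x ^ 4)
    + (-1/464 : ℝ) • (RP ^ 3 * LX x ^ 2) + (1/100224 : ℝ) • (RP ^ 4 * LX x ^ 0)

def T7 (x : Fin 48 → ℝ) : PPoly :=
  RP ^ 0 * LX x ^ 7 + (-21/58 : ℝ) • (RP ^ 1 * LX x ^ 5) + (15/464 : ℝ) • (RP ^ 2 * LX x ^ 3)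
    + (-5/8352 : ℝ) • (RP ^ 3 * LX x ^ 1)

lemma lap_T8 (x : Fin 48 → ℝ) (hx : ∑ i : Fin 48, x i ^ 2 = 1) : lapP (T8 x) = 0 := by
  rw [T8, lapP_add, lapP_add, lapP_add, lapP_add, lapP_smul, lapP_smul, lapP_smul, lapP_smul,
      lap_inst 0 8 0 56 x hx (by norm_num) (by norm_num),
      lap_inst 1 6 120 30 x hx (by norm_num) (by norm_num),
      lap_inst 2 4 232 12 x hx (by norm_num) (by norm_num),
      lap_inst 3 2 336 2 x hx (by norm_num) (by norm_num),
      lap_inst 4 0 432 0 x hx (by norm_num) (by norm_num)]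
  norm_num
  module

lemma lap_T7 (x : Fin 48 → ℝ) (hx : ∑ i : Fin 48, x i ^ 2 = 1) : lapP (T7 x) = 0 := by
  rw [T7, lapP_add, lapP_add, lapP_add, lapP_smul, lapP_smul, lapP_smul,
      lap_inst 0 7 0 42 x hx (by norm_num) (by norm_num),
      lap_inst 1 5 116 20 x hx (by norm_num) (by norm_num),
      lap_inst 2 3 224 6 x hx (by norm_num) (by norm_num),
      lap_inst 3 1 324 0 x hx (by norm_num) (by norm_num)]
  norm_num
  module


lemma apolar_sum_right' {ι : Type*} (s : Finset ι) (p : PPoly) (f : ι → PPoly) :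
    apolar p (∑ i ∈ s, f i) = ∑ i ∈ s, apolar p (f i) := by
  rw [apolar_comm, apolar_sum_left]
  exact Finset.sum_congr rfl fun i _ => apolar_comm _ _

lemma apolar_C_mul_left (c : ℝ) (p q : PPoly) : apolar (C c * p) q = c * apolar p q := by
  rw [MvPolynomial.C_mul', apolar_smul_left]

lemma apolar_RP_mul (p q : PPoly) : apolar (RP * p) q = apolar p (lapP q) := by
  have e : RP * p = ∑ i : Fin 48, X i * (X i * p) := by
    rw [RP, Finset.sum_mul]
    exact Finset.sum_congr rfl fun i _ => by ring
  rw [e, apolar_sum_left]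
  have e2 : ∀ i : Fin 48, apolar (X i * (X i * p)) q = apolar p (pderiv i (pderiv i q)) := by
    intro i
    rw [apolar_X_mul, apolar_X_mul]
  rw [Finset.sum_congr rfl fun i _ => e2 i, lapP, ← apolar_sum_right']

lemma lap_LX_pow (m : ℕ) (y : Fin 48 → ℝ) (hy : ∑ i : Fin 48, y i ^ 2 = 1) :
    lapP (LX y ^ (m+2)) = (((m:ℝ)+2)*((m:ℝ)+1)) • LX y ^ m := by
  have h := lap_inst 0 (m+2) 0 (((m:ℝ)+2)*((m:ℝ)+1)) y hy (by norm_num) (by push_cast; ring)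
  simpa using h

lemma apolar_LX_pow (x y : Fin 48 → ℝ) (m : ℕ) :
    apolar (LX x ^ m) (LX y ^ m) = (Nat.factorial m : ℝ) * (∑ i : Fin 48, x i * y i) ^ m := by
  induction m with
  | zero => simpa using apolar_one_one
  | succ m ih =>
    have expand : LX x ^ (m+1) = ∑ i : Fin 48, C (x i) * (X i * LX x ^ m) := by
      rw [pow_succ', LX, Finset.sum_mul]
      exact Finset.sum_congr rfl fun i _ => by ring
    rw [expand, apolar_sum_left]
    have step : ∀ i : Fin 48, apolar (C (x i) * (X i * LX x ^ m)) (LX y ^ (m+1))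
        = (x i * y i) * (((m:ℝ)+1) * ((Nat.factorial m : ℝ) * (∑ i : Fin 48, x i * y i) ^ m)) := by
      intro i
      rw [apolar_C_mul_left, apolar_X_mul]
      have hd : pderiv i (LX y ^ (m+1)) = (((m:ℝ)+1) * y i) • LX y ^ m := by
        rw [pderiv_pow, pderiv_LX, Nat.add_sub_cancel, MvPolynomial.smul_eq_C_mul]
        simp only [map_mul, map_add, map_natCast, map_one]
        push_cast
        ring
      rw [hd, apolar_smul_right, ih]
      ring
    rw [Finset.sum_congr rfl fun i _ => step i, ← Finset.sum_mul]
    rw [Nat.factorial_succ]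
    push_cast
    ring

lemma red' (y : Fin 48 → ℝ) (hy : ∑ i : Fin 48, y i ^ 2 = 1) (p : PPoly) (m k : ℕ)
    (h : k = m + 2) :
    apolar (RP * p) (LX y ^ k) = ((k:ℝ)*((k:ℝ)-1)) * apolar p (LX y ^ m) := by
  subst h
  rw [apolar_RP_mul, lap_LX_pow m y hy, apolar_smul_right]
  push_cast
  ring



lemma apolar_T8_T8 (x y : Fin 48 → ℝ) (hx : ∑ i : Fin 48, x i ^ 2 = 1)
    (hy : ∑ i : Fin 48, y i ^ 2 = 1) :
    apolar (T8 x) (T8 y)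
      = 40320 * ((∑ i : Fin 48, x i * y i) ^ 8 - (7/15) * (∑ i : Fin 48, x i * y i) ^ 6
          + (7/116) * (∑ i : Fin 48, x i * y i) ^ 4 - (1/464) * (∑ i : Fin 48, x i * y i) ^ 2
          + 1/100224) := by
  set t := ∑ i : Fin 48, x i * y i with ht
  -- vanishing of all the `RP`-divisible parts of `T8 y` against the harmonic `T8 x`
  have van : ∀ p : PPoly, apolar (T8 x) (RP * p) = 0 := by
    intro p
    rw [apolar_comm, apolar_RP_mul, lap_T8 x hx, apolar_zero_right]
  have hT8y : T8 y = RP ^ 0 * LX y ^ 8 + (-7/15 : ℝ) • (RP ^ 1 * LX y ^ 6)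
      + (7/116 : ℝ) • (RP ^ 2 * LX y ^ 4) + (-1/464 : ℝ) • (RP ^ 3 * LX y ^ 2)
      + (1/100224 : ℝ) • (RP ^ 4 * LX y ^ 0) := rfl
  have step1 : apolar (T8 x) (T8 y) = apolar (T8 x) (LX y ^ 8) := by
    rw [hT8y, apolar_add_right, apolar_add_right, apolar_add_right, apolar_add_right,
        apolar_smul_right, apolar_smul_right, apolar_smul_right, apolar_smul_right,
        show RP ^ 1 * LX y ^ 6 = RP * (LX y ^ 6) from by ring,
        show RP ^ 2 * LX y ^ 4 = RP * (RP * LX y ^ 4) from by ring,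
        show RP ^ 3 * LX y ^ 2 = RP * (RP ^ 2 * LX y ^ 2) from by ring,
        show RP ^ 4 * LX y ^ 0 = RP * (RP ^ 3 * LX y ^ 0) from by ring,
        van, van, van, van,
        show RP ^ 0 * LX y ^ 8 = LX y ^ 8 from by ring]
    ring
  have hT8x : T8 x = RP ^ 0 * LX x ^ 8 + (-7/15 : ℝ) • (RP ^ 1 * LX x ^ 6)
      + (7/116 : ℝ) • (RP ^ 2 * LX x ^ 4) + (-1/464 : ℝ) • (RP ^ 3 * LX x ^ 2)
      + (1/100224 : ℝ) • (RP ^ 4 * LX x ^ 0) := rfl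
  have e0 : apolar (RP ^ 0 * LX x ^ 8) (LX y ^ 8) = 40320 * t ^ 8 := by
    rw [show RP ^ 0 * LX x ^ 8 = LX x ^ 8 from by ring, apolar_LX_pow]
    rw [← ht]
    norm_num [Nat.factorial]
    try ring
  have e1 : apolar (RP ^ 1 * LX x ^ 6) (LX y ^ 8) = 40320 * t ^ 6 := by
    rw [show RP ^ 1 * LX x ^ 6 = RP * (LX x ^ 6) from by ring,
        red' y hy _ 6 8 (by norm_num), apolar_LX_pow]
    rw [← ht]
    norm_num [Nat.factorial]
    try ring
  have e2 : apolar (RP ^ 2 * LX x ^ 4) (LX y ^ 8) = 40320 * t ^ 4 := by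
    rw [show RP ^ 2 * LX x ^ 4 = RP * (RP * (LX x ^ 4)) from by ring,
        red' y hy _ 6 8 (by norm_num), red' y hy _ 4 6 (by norm_num), apolar_LX_pow]
    rw [← ht]
    norm_num [Nat.factorial]
    try ring
  have e3 : apolar (RP ^ 3 * LX x ^ 2) (LX y ^ 8) = 40320 * t ^ 2 := by
    rw [show RP ^ 3 * LX x ^ 2 = RP * (RP * (RP * (LX x ^ 2))) from by ring,
        red' y hy _ 6 8 (by norm_num), red' y hy _ 4 6 (by norm_num),
        red' y hy _ 2 4 (by norm_num), apolar_LX_pow]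
    rw [← ht]
    norm_num [Nat.factorial]
    try ring
  have e4 : apolar (RP ^ 4 * LX x ^ 0) (LX y ^ 8) = 40320 := by
    rw [show RP ^ 4 * LX x ^ 0 = RP * (RP * (RP * (RP * (LX x ^ 0)))) from by ring,
        red' y hy _ 6 8 (by norm_num), red' y hy _ 4 6 (by norm_num),
        red' y hy _ 2 4 (by norm_num), red' y hy _ 0 2 (by norm_num), apolar_LX_pow]
    rw [← ht]
    norm_num [Nat.factorial]
    try ring
  rw [step1, hT8x, apolar_add_left, apolar_add_left, apolar_add_left, apolar_add_left,
      apolar_smul_left, apolar_smul_left, apolar_smul_left, apolar_smul_left,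
      e0, e1, e2, e3, e4]
  ring

lemma apolar_T7_T7 (x y : Fin 48 → ℝ) (hx : ∑ i : Fin 48, x i ^ 2 = 1)
    (hy : ∑ i : Fin 48, y i ^ 2 = 1) :
    apolar (T7 x) (T7 y)
      = 5040 * ((∑ i : Fin 48, x i * y i) ^ 7 - (21/58) * (∑ i : Fin 48, x i * y i) ^ 5
          + (15/464) * (∑ i : Fin 48, x i * y i) ^ 3
          - (5/8352) * (∑ i : Fin 48, x i * y i)) := by
  set t := ∑ i : Fin 48, x i * y i with ht
  have van : ∀ p : PPoly, apolar (T7 x) (RP * p) = 0 := by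
    intro p
    rw [apolar_comm, apolar_RP_mul, lap_T7 x hx, apolar_zero_right]
  have hT7y : T7 y = RP ^ 0 * LX y ^ 7 + (-21/58 : ℝ) • (RP ^ 1 * LX y ^ 5)
      + (15/464 : ℝ) • (RP ^ 2 * LX y ^ 3) + (-5/8352 : ℝ) • (RP ^ 3 * LX y ^ 1) := rfl
  have step1 : apolar (T7 x) (T7 y) = apolar (T7 x) (LX y ^ 7) := by
    rw [hT7y, apolar_add_right, apolar_add_right, apolar_add_right,
        apolar_smul_right, apolar_smul_right, apolar_smul_right,
        show RP ^ 1 * LX y ^ 5 = RP * (LX y ^ 5) from by ring,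
        show RP ^ 2 * LX y ^ 3 = RP * (RP * LX y ^ 3) from by ring,
        show RP ^ 3 * LX y ^ 1 = RP * (RP ^ 2 * LX y ^ 1) from by ring,
        van, van, van,
        show RP ^ 0 * LX y ^ 7 = LX y ^ 7 from by ring]
    ring
  have hT7x : T7 x = RP ^ 0 * LX x ^ 7 + (-21/58 : ℝ) • (RP ^ 1 * LX x ^ 5)
      + (15/464 : ℝ) • (RP ^ 2 * LX x ^ 3) + (-5/8352 : ℝ) • (RP ^ 3 * LX x ^ 1) := rfl
  have e0 : apolar (RP ^ 0 * LX x ^ 7) (LX y ^ 7) = 5040 * t ^ 7 := by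
    rw [show RP ^ 0 * LX x ^ 7 = LX x ^ 7 from by ring, apolar_LX_pow]
    rw [← ht]
    norm_num [Nat.factorial]
    try ring
  have e1 : apolar (RP ^ 1 * LX x ^ 5) (LX y ^ 7) = 5040 * t ^ 5 := by
    rw [show RP ^ 1 * LX x ^ 5 = RP * (LX x ^ 5) from by ring,
        red' y hy _ 5 7 (by norm_num), apolar_LX_pow]
    rw [← ht]
    norm_num [Nat.factorial]
    try ring
  have e2 : apolar (RP ^ 2 * LX x ^ 3) (LX y ^ 7) = 5040 * t ^ 3 := by
    rw [show RP ^ 2 * LX x ^ 3 = RP * (RP * (LX x ^ 3)) from by ring,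
        red' y hy _ 5 7 (by norm_num), red' y hy _ 3 5 (by norm_num), apolar_LX_pow]
    rw [← ht]
    norm_num [Nat.factorial]
    try ring
  have e3 : apolar (RP ^ 3 * LX x ^ 1) (LX y ^ 7) = 5040 * t := by
    rw [show RP ^ 3 * LX x ^ 1 = RP * (RP * (RP * (LX x ^ 1))) from by ring,
        red' y hy _ 5 7 (by norm_num), red' y hy _ 3 5 (by norm_num),
        red' y hy _ 1 3 (by norm_num), apolar_LX_pow]
    rw [← ht]
    norm_num [Nat.factorial]
    try ring
  rw [step1, hT7x, apolar_add_left, apolar_add_left, apolar_add_left,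
      apolar_smul_left, apolar_smul_left, apolar_smul_left,
      e0, e1, e2, e3]
  ring



/-- the master positivity lemma -/
lemma master {V : Type*} {ι : Type*} [Fintype ι] (C : Finset V) (φ : V → ι → ℝ)
    (T : V → PPoly) :
    0 ≤ ∑ x ∈ C, ∑ y ∈ C, (∑ p : ι, φ x p * φ y p) * apolar (T x) (T y) := by
  have key : ∀ p : ι, 0 ≤ ∑ x ∈ C, ∑ y ∈ C, φ x p * φ y p * apolar (T x) (T y) := by
    intro p
    have e : ∑ x ∈ C, ∑ y ∈ C, φ x p * φ y p * apolar (T x) (T y)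
        = apolar (∑ x ∈ C, φ x p • T x) (∑ x ∈ C, φ x p • T x) := by
      rw [apolar_sum_left]
      refine Finset.sum_congr rfl fun x _ => ?_
      rw [apolar_smul_left, apolar_sum_right', Finset.mul_sum]
      refine Finset.sum_congr rfl fun y _ => ?_
      rw [apolar_smul_right]
      ring
    rw [e]
    exact apolar_self_nonneg _
  have s1 : ∀ x, ∑ y ∈ C, (∑ p : ι, φ x p * φ y p) * apolar (T x) (T y)
      = ∑ p : ι, ∑ y ∈ C, φ x p * φ y p * apolar (T x) (T y) := by
    intro x
    calc ∑ y ∈ C, (∑ p : ι, φ x p * φ y p) * apolar (T x) (T y)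
        = ∑ y ∈ C, ∑ p : ι, φ x p * φ y p * apolar (T x) (T y) :=
          Finset.sum_congr rfl fun y _ => Finset.sum_mul _ _ _
      _ = ∑ p : ι, ∑ y ∈ C, φ x p * φ y p * apolar (T x) (T y) := Finset.sum_comm
  have e2 : ∑ x ∈ C, ∑ y ∈ C, (∑ p : ι, φ x p * φ y p) * apolar (T x) (T y)
      = ∑ p : ι, ∑ x ∈ C, ∑ y ∈ C, φ x p * φ y p * apolar (T x) (T y) := by
    calc ∑ x ∈ C, ∑ y ∈ C, (∑ p : ι, φ x p * φ y p) * apolar (T x) (T y)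
        = ∑ x ∈ C, ∑ p : ι, ∑ y ∈ C, φ x p * φ y p * apolar (T x) (T y) :=
          Finset.sum_congr rfl fun x _ => s1 x
      _ = ∑ p : ι, ∑ x ∈ C, ∑ y ∈ C, φ x p * φ y p * apolar (T x) (T y) := Finset.sum_comm
  rw [e2]
  exact Finset.sum_nonneg fun p _ => key p

abbrev EV := EuclideanSpace ℝ (Fin 48)

def phiS (v : EV) (p : Fin 48 × Fin 48) : ℝ :=
  v p.1 * v p.2 - if p.1 = p.2 then 1/48 else 0

def phiTS (v : EV) (p : Fin 48 × (Fin 48 × Fin 48)) : ℝ := v p.1 * phiS v p.2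

lemma feat_prod {ι κ : Type*} [Fintype ι] [Fintype κ] (f g : ι → ℝ) (u v : κ → ℝ) :
    ∑ p : ι × κ, (f p.1 * u p.2) * (g p.1 * v p.2)
      = (∑ i : ι, f i * g i) * (∑ k : κ, u k * v k) := by
  rw [Fintype.sum_prod_type, Finset.sum_mul_sum]
  exact Finset.sum_congr rfl fun i _ => Finset.sum_congr rfl fun k _ => by ring

lemma val_s (x y : EV) (hx : ∑ i : Fin 48, x i ^ 2 = 1) (hy : ∑ i : Fin 48, y i ^ 2 = 1) :
    ∑ p : Fin 48 × Fin 48, phiS x p * phiS y p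
      = (∑ i : Fin 48, x i * y i) ^ 2 - 1/48 := by
  rw [Fintype.sum_prod_type]
  have hf : ∀ i j : Fin 48, phiS x (i, j) * phiS y (i, j)
      = (x i * y i) * (x j * y j)
        + (if i = j then (-(1/48)*(x i ^ 2) - (1/48)*(y i ^ 2) + 1/2304) else 0) := by
    intro i j
    by_cases h : i = j
    · subst h; simp [phiS]; ring
    · simp [phiS, h]; ring
  rw [Finset.sum_congr rfl fun i _ => Finset.sum_congr rfl fun j _ => hf i j]
  simp only [Finset.sum_add_distrib]
  rw [← Finset.sum_mul_sum]
  have hdiag : ∀ i : Fin 48, ∑ j : Fin 48,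
      (if i = j then (-(1/48)*(x i ^ 2) - (1/48)*(y i ^ 2) + 1/2304) else 0)
        = -(1/48)*(x i ^ 2) - (1/48)*(y i ^ 2) + 1/2304 := by
    intro i
    rw [Finset.sum_ite_eq]
    simp
  rw [Finset.sum_congr rfl fun i _ => hdiag i]
  have e : ∑ i : Fin 48, (-(1/48)*(x i ^ 2) - (1/48)*(y i ^ 2) + 1/2304)
      = -(1/48) * (∑ i : Fin 48, x i ^ 2) - (1/48) * (∑ i : Fin 48, y i ^ 2) + 48 * (1/2304) := by
    rw [Finset.sum_add_distrib, Finset.sum_sub_distrib, ← Finset.mul_sum, ← Finset.mul_sum,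
        Finset.sum_const]
    simp
  rw [e, hx, hy]
  have e2 : ∑ i : Fin 48, ∑ j : Fin 48, (x i * y i) * (x j * y j)
      = (∑ i : Fin 48, x i * y i) * (∑ i : Fin 48, x i * y i) := (Finset.sum_mul_sum _ _ _ _).symm
  norm_num
  ring

lemma val_ts (x y : EV) (hx : ∑ i : Fin 48, x i ^ 2 = 1) (hy : ∑ i : Fin 48, y i ^ 2 = 1) :
    ∑ p : Fin 48 × (Fin 48 × Fin 48), phiTS x p * phiTS y p
      = (∑ i : Fin 48, x i * y i) * ((∑ i : Fin 48, x i * y i) ^ 2 - 1/48) := by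
  have e : ∑ p : Fin 48 × (Fin 48 × Fin 48), phiTS x p * phiTS y p
      = (∑ i : Fin 48, x i * y i) * (∑ k : Fin 48 × Fin 48, phiS x k * phiS y k) := by
    simp only [phiTS]
    exact feat_prod _ _ _ _
  rw [e, val_s x y hx hy]


open Finset

lemma apolar_T7_T7' (x y : EV) (hx : ∑ i : Fin 48, x i ^ 2 = 1)
    (hy : ∑ i : Fin 48, y i ^ 2 = 1) :
    apolar (T7 (fun i => x i)) (T7 (fun i => y i))
      = 5040 * ((∑ i : Fin 48, x i * y i) ^ 7 - (21/58) * (∑ i : Fin 48, x i * y i) ^ 5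
          + (15/464) * (∑ i : Fin 48, x i * y i) ^ 3
          - (5/8352) * (∑ i : Fin 48, x i * y i)) :=
  apolar_T7_T7 _ _ hx hy

lemma apolar_T8_T8' (x y : EV) (hx : ∑ i : Fin 48, x i ^ 2 = 1)
    (hy : ∑ i : Fin 48, y i ^ 2 = 1) :
    apolar (T8 (fun i => x i)) (T8 (fun i => y i))
      = 40320 * ((∑ i : Fin 48, x i * y i) ^ 8 - (7/15) * (∑ i : Fin 48, x i * y i) ^ 6
          + (7/116) * (∑ i : Fin 48, x i * y i) ^ 4 - (1/464) * (∑ i : Fin 48, x i * y i) ^ 2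
          + 1/100224) :=
  apolar_T8_T8 _ _ hx hy

lemma pointwise (x y : EV) (hx : ∑ i : Fin 48, x i ^ 2 = 1) (hy : ∑ i : Fin 48, y i ^ 2 = 1) :
    PP11 (∑ i : Fin 48, x i * y i)
      = (1/13478400
        + (-118957/811814400) * ((50 * (∑ i : Fin 48, x i * y i) ^ 3 - 3 * (∑ i : Fin 48, x i * y i)) / 47)
        + ((3961/1758931200) * (∑ i : Fin 48, x i * y i)
        + ((1/183222) * (∑ p : Fin 48 × Fin 48, phiS x p * phiS y p)
        + ((1533199/129918297600) * (apolar (T7 (fun i => x i)) (T7 (fun i => y i)))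
        + ((16264187/120294720000) * ((∑ i : Fin 48, x i * y i) * apolar (T7 (fun i => x i)) (T7 (fun i => y i)))
        + ((704189/2706631200) * ((∑ p : Fin 48 × Fin 48, phiS x p * phiS y p) * apolar (T7 (fun i => x i)) (T7 (fun i => y i)))
        + ((1537/71604000) * ((∑ p : Fin 48 × (Fin 48 × Fin 48), phiTS x p * phiTS y p) * apolar (T7 (fun i => x i)) (T7 (fun i => y i)))
        + ((317/237619200) * (apolar (T8 (fun i => x i)) (T8 (fun i => y i)))
        + ((135305/6928975872) * ((∑ i : Fin 48, x i * y i) * apolar (T8 (fun i => x i)) (T8 (fun i => y i)))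
        + ((118933/2004912000) * ((∑ p : Fin 48 × Fin 48, phiS x p * phiS y p) * apolar (T8 (fun i => x i)) (T8 (fun i => y i)))
        + ((1/40320) * ((∑ p : Fin 48 × (Fin 48 × Fin 48), phiTS x p * phiTS y p) * apolar (T8 (fun i => x i)) (T8 (fun i => y i)))))))))))))) := by
  rw [apolar_T7_T7' x y hx hy, apolar_T8_T8' x y hx hy, val_s x y hx hy, val_ts x y hx hy, PP11]
  ring

theorem PP11_sum_lower_bound_of_M3_eq_zero
    (C : Finset (EuclideanSpace ℝ (Fin 48)))
    (hCsphere : ∀ x ∈ C, ‖x‖ = 1)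
    (hM3 : ∑ x ∈ C, ∑ y ∈ C,
      (50 * (inner ℝ x y : ℝ) ^ 3 - 3 * (inner ℝ x y : ℝ)) / 47 = 0) :
    ∑ x ∈ C, ∑ y ∈ C, PP11 (inner ℝ x y : ℝ) ≥ (C.card : ℝ) ^ 2 / 13478400 := by
  have hinner : ∀ x y : EuclideanSpace ℝ (Fin 48),
      (inner ℝ x y : ℝ) = ∑ i : Fin 48, x i * y i := by
    intro x y
    rw [PiLp.inner_apply]
    exact Finset.sum_congr rfl fun i _ => by simp [RCLike.inner_apply, mul_comm]
  have hunit : ∀ x ∈ C, ∑ i : Fin 48, x i ^ 2 = 1 := by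
    intro x hx
    have h1 := hCsphere x hx
    have h2 : (inner ℝ x x : ℝ) = 1 := by
      rw [real_inner_self_eq_norm_sq, h1]; norm_num
    rw [hinner x x] at h2
    rw [← h2]
    exact Finset.sum_congr rfl fun i _ => (sq (x i))
  have P1 : 0 ≤ ∑ x ∈ C, ∑ y ∈ C, (∑ i : Fin 48, x i * y i) := by
    simpa [apolar_one_one] using master C (fun v (i : Fin 48) => v i) (fun _ => (1 : PPoly))
  have P2 : 0 ≤ ∑ x ∈ C, ∑ y ∈ C, (∑ p : Fin 48 × Fin 48, phiS x p * phiS y p) := by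
    simpa [apolar_one_one] using master C phiS (fun _ => (1 : PPoly))
  have P3 : 0 ≤ ∑ x ∈ C, ∑ y ∈ C, apolar (T7 (fun i => x i)) (T7 (fun i => y i)) := by
    simpa using master C (fun _ (_ : Unit) => (1:ℝ)) (fun v => T7 (fun i => v i))
  have P4 : 0 ≤ ∑ x ∈ C, ∑ y ∈ C, (∑ i : Fin 48, x i * y i) * apolar (T7 (fun i => x i)) (T7 (fun i => y i)) := by
    simpa using master C (fun v (i : Fin 48) => v i) (fun v => T7 (fun i => v i))
  have P5 : 0 ≤ ∑ x ∈ C, ∑ y ∈ C, (∑ p : Fin 48 × Fin 48, phiS x p * phiS y p) * apolar (T7 (fun i => x i)) (T7 (fun i => y i)) := by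
    simpa using master C phiS (fun v => T7 (fun i => v i))
  have P6 : 0 ≤ ∑ x ∈ C, ∑ y ∈ C, (∑ p : Fin 48 × (Fin 48 × Fin 48), phiTS x p * phiTS y p) * apolar (T7 (fun i => x i)) (T7 (fun i => y i)) := by
    simpa using master C phiTS (fun v => T7 (fun i => v i))
  have P7 : 0 ≤ ∑ x ∈ C, ∑ y ∈ C, apolar (T8 (fun i => x i)) (T8 (fun i => y i)) := by
    simpa using master C (fun _ (_ : Unit) => (1:ℝ)) (fun v => T8 (fun i => v i))
  have P8 : 0 ≤ ∑ x ∈ C, ∑ y ∈ C, (∑ i : Fin 48, x i * y i) * apolar (T8 (fun i => x i)) (T8 (fun i => y i)) := by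
    simpa using master C (fun v (i : Fin 48) => v i) (fun v => T8 (fun i => v i))
  have P9 : 0 ≤ ∑ x ∈ C, ∑ y ∈ C, (∑ p : Fin 48 × Fin 48, phiS x p * phiS y p) * apolar (T8 (fun i => x i)) (T8 (fun i => y i)) := by
    simpa using master C phiS (fun v => T8 (fun i => v i))
  have P10 : 0 ≤ ∑ x ∈ C, ∑ y ∈ C, (∑ p : Fin 48 × (Fin 48 × Fin 48), phiTS x p * phiTS y p) * apolar (T8 (fun i => x i)) (T8 (fun i => y i)) := by
    simpa using master C phiTS (fun v => T8 (fun i => v i))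
  have hM3' : ∑ x ∈ C, ∑ y ∈ C,
      (50 * (∑ i : Fin 48, x i * y i) ^ 3 - 3 * (∑ i : Fin 48, x i * y i)) / 47 = 0 := by
    rw [← hM3]
    exact Finset.sum_congr rfl fun x _ => Finset.sum_congr rfl fun y _ => by rw [hinner x y]
  have expand : ∑ x ∈ C, ∑ y ∈ C, PP11 (inner ℝ x y)
      = ∑ x ∈ C, ∑ y ∈ C, (1/13478400
        + (-118957/811814400) * ((50 * (∑ i : Fin 48, x i * y i) ^ 3 - 3 * (∑ i : Fin 48, x i * y i)) / 47)
        + ((3961/1758931200) * (∑ i : Fin 48, x i * y i)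
        + ((1/183222) * (∑ p : Fin 48 × Fin 48, phiS x p * phiS y p)
        + ((1533199/129918297600) * (apolar (T7 (fun i => x i)) (T7 (fun i => y i)))
        + ((16264187/120294720000) * ((∑ i : Fin 48, x i * y i) * apolar (T7 (fun i => x i)) (T7 (fun i => y i)))
        + ((704189/2706631200) * ((∑ p : Fin 48 × Fin 48, phiS x p * phiS y p) * apolar (T7 (fun i => x i)) (T7 (fun i => y i)))
        + ((1537/71604000) * ((∑ p : Fin 48 × (Fin 48 × Fin 48), phiTS x p * phiTS y p) * apolar (T7 (fun i => x i)) (T7 (fun i => y i)))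
        + ((317/237619200) * (apolar (T8 (fun i => x i)) (T8 (fun i => y i)))
        + ((135305/6928975872) * ((∑ i : Fin 48, x i * y i) * apolar (T8 (fun i => x i)) (T8 (fun i => y i)))
        + ((118933/2004912000) * ((∑ p : Fin 48 × Fin 48, phiS x p * phiS y p) * apolar (T8 (fun i => x i)) (T8 (fun i => y i)))
        + ((1/40320) * ((∑ p : Fin 48 × (Fin 48 × Fin 48), phiTS x p * phiTS y p) * apolar (T8 (fun i => x i)) (T8 (fun i => y i)))))))))))))) := by
    refine Finset.sum_congr rfl fun x hxm => Finset.sum_congr rfl fun y hym => ?_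
    rw [hinner x y]
    exact pointwise x y (hunit x hxm) (hunit y hym)
  rw [expand]
  simp only [Finset.sum_add_distrib, ← Finset.mul_sum, Finset.sum_const, nsmul_eq_mul]
  rw [hM3']
  have c1 := mul_nonneg (show (0:ℝ) ≤ 3961/1758931200 by norm_num) P1
  have c2 := mul_nonneg (show (0:ℝ) ≤ 1/183222 by norm_num) P2
  have c3 := mul_nonneg (show (0:ℝ) ≤ 1533199/129918297600 by norm_num) P3
  have c4 := mul_nonneg (show (0:ℝ) ≤ 16264187/120294720000 by norm_num) P4
  have c5 := mul_nonneg (show (0:ℝ) ≤ 704189/2706631200 by norm_num) P5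
  have c6 := mul_nonneg (show (0:ℝ) ≤ 1537/71604000 by norm_num) P6
  have c7 := mul_nonneg (show (0:ℝ) ≤ 317/237619200 by norm_num) P7
  have c8 := mul_nonneg (show (0:ℝ) ≤ 135305/6928975872 by norm_num) P8
  have c9 := mul_nonneg (show (0:ℝ) ≤ 118933/2004912000 by norm_num) P9
  have c10 := mul_nonneg (show (0:ℝ) ≤ 1/40320 by norm_num) P10
  have hsq : ((C.card : ℝ) * ((C.card : ℝ) * (1/13478400))) = (C.card : ℝ)^2 / 13478400 := by ring
  nlinarith [c1, c2, c3, c4, c5, c6, c7, c8, c9, c10]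


end PP11Aux
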